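/- Let q, k, p be real numbers with 1 < q < k < p, and let d₁, d₂, d₃, λ > 0. Define f(t) = d₁ + d₂·t^(p−q) − λ·d₃·t^(k−q) for t ≥ 0 and C₀ := ((p−q)/(k−q))^((k−q)/(p−q)) · ((p−q)/(p−k))^((p−k)/(p−q)). Then there exists t > 0 with f(t) < 0 if and only if λ > C₀ · d₂^((k−q)/(p−q)) · d₁^((p−k)/(p−q)) / d₃. -/

import Mathlib

open Real

private lemma gm_eq (a b c d₁ d₂ t : ℝ) (ha : 0 < a) (hb : 0 < b) (hc : 0 < c)
    (hd₁ : 0 < d₁) (hd₂ : 0 < d₂) (ht : 0 < t) :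
    ((a / c) * (d₁ * t ^ (-b))) ^ (c / a) * ((a / b) * (d₂ * t ^ c)) ^ (b / a)
      = ((a / b) ^ (b / a) * (a / c) ^ (c / a)) * d₂ ^ (b / a) * d₁ ^ (c / a) := by
  have htb : (0:ℝ) < t ^ (-b) := rpow_pos_of_pos ht _
  have htc : (0:ℝ) < t ^ (c:ℝ) := rpow_pos_of_pos ht _
  have e1 : ((a / c) * (d₁ * t ^ (-b))) ^ (c / a)
      = (a / c) ^ (c / a) * (d₁ ^ (c / a) * (t ^ (-b)) ^ (c / a)) := by
    rw [mul_rpow (by positivity) (by positivity), mul_rpow hd₁.le htb.le]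
  have e2 : ((a / b) * (d₂ * t ^ c)) ^ (b / a)
      = (a / b) ^ (b / a) * (d₂ ^ (b / a) * (t ^ (c:ℝ)) ^ (b / a)) := by
    rw [mul_rpow (by positivity) (by positivity), mul_rpow hd₂.le htc.le]
  rw [e1, e2, ← rpow_mul ht.le, ← rpow_mul ht.le]
  have h1 : t ^ (-b * (c/a)) * t ^ (c * (b/a)) = 1 := by
    rw [← rpow_add ht, show -b * (c/a) + c * (b/a) = 0 by ring, rpow_zero]
  linear_combination ((a/c)^(c/a) * d₁^(c/a) * (a/b)^(b/a) * d₂^(b/a)) * h1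

private lemma amgm (a b c d₁ d₂ t : ℝ) (ha : 0 < a) (hb : 0 < b) (hc : 0 < c)
    (habc : a = b + c) (hd₁ : 0 < d₁) (hd₂ : 0 < d₂) (ht : 0 < t) :
    ((a / b) ^ (b / a) * (a / c) ^ (c / a)) * d₂ ^ (b / a) * d₁ ^ (c / a)
      ≤ d₁ * t ^ (-b) + d₂ * t ^ c := by
  have htb : (0:ℝ) < t ^ (-b) := rpow_pos_of_pos ht _
  have htc : (0:ℝ) < t ^ (c:ℝ) := rpow_pos_of_pos ht _
  have key := Real.geom_mean_le_arith_mean2_weighted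
    (w₁ := c/a) (w₂ := b/a) (p₁ := (a/c) * (d₁ * t ^ (-b))) (p₂ := (a/b) * (d₂ * t ^ c))
    (by positivity) (by positivity) (by positivity) (by positivity)
    (by field_simp; linarith)
  rw [gm_eq a b c d₁ d₂ t ha hb hc hd₁ hd₂ ht] at key
  calc _ ≤ (c/a) * ((a/c) * (d₁ * t ^ (-b))) + (b/a) * ((a/b) * (d₂ * t ^ c)) := key
    _ = d₁ * t ^ (-b) + d₂ * t ^ c := by field_simp

private lemma eq_at_tstar (a b c d₁ d₂ : ℝ) (ha : 0 < a) (hb : 0 < b) (hc : 0 < c)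
    (habc : a = b + c) (hd₁ : 0 < d₁) (hd₂ : 0 < d₂) :
    d₁ * ((d₁ * b / (d₂ * c)) ^ (1/a)) ^ (-b) + d₂ * ((d₁ * b / (d₂ * c)) ^ (1/a)) ^ c
      = ((a / b) ^ (b / a) * (a / c) ^ (c / a)) * d₂ ^ (b / a) * d₁ ^ (c / a) := by
  have hM : (0:ℝ) < d₁ * b / (d₂ * c) := by positivity
  rw [← rpow_mul hM.le, ← rpow_mul hM.le,
    show 1/a * (-b) = -(b/a) by ring, show 1/a * c = c/a by ring,
    rpow_neg hM.le, div_rpow (by positivity) (by positivity),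
    div_rpow (by positivity) (by positivity),
    mul_rpow hd₁.le hb.le, mul_rpow hd₂.le hc.le,
    mul_rpow hd₁.le hb.le, mul_rpow hd₂.le hc.le,
    div_rpow ha.le hb.le, div_rpow ha.le hc.le]
  have hA : d₁ ^ (b/a) * d₁ ^ (c/a) = d₁ := by
    rw [← rpow_add hd₁, ← add_div, ← habc, div_self ha.ne', rpow_one]
  have hB : d₂ ^ (b/a) * d₂ ^ (c/a) = d₂ := by
    rw [← rpow_add hd₂, ← add_div, ← habc, div_self ha.ne', rpow_one]
  have hP : b ^ (b/a) * b ^ (c/a) = b := by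
    rw [← rpow_add hb, ← add_div, ← habc, div_self ha.ne', rpow_one]
  have hQ : c ^ (b/a) * c ^ (c/a) = c := by
    rw [← rpow_add hc, ← add_div, ← habc, div_self ha.ne', rpow_one]
  have hR : a ^ (b/a) * a ^ (c/a) = a := by
    rw [← rpow_add ha, ← add_div, ← habc, div_self ha.ne', rpow_one]
  have pA1 : (0:ℝ) < d₁ ^ (b/a) := rpow_pos_of_pos hd₁ _
  have pA2 : (0:ℝ) < d₁ ^ (c/a) := rpow_pos_of_pos hd₁ _
  have pB1 : (0:ℝ) < d₂ ^ (b/a) := rpow_pos_of_pos hd₂ _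
  have pB2 : (0:ℝ) < d₂ ^ (c/a) := rpow_pos_of_pos hd₂ _
  have pP1 : (0:ℝ) < b ^ (b/a) := rpow_pos_of_pos hb _
  have pP2 : (0:ℝ) < b ^ (c/a) := rpow_pos_of_pos hb _
  have pQ1 : (0:ℝ) < c ^ (b/a) := rpow_pos_of_pos hc _
  have pQ2 : (0:ℝ) < c ^ (c/a) := rpow_pos_of_pos hc _
  have pR1 : (0:ℝ) < a ^ (b/a) := rpow_pos_of_pos ha _
  have pR2 : (0:ℝ) < a ^ (c/a) := rpow_pos_of_pos ha _
  field_simp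
  linear_combination d₁*(c^(b/a))*(c^(c/a))*hB + d₁*d₂*hQ
    + d₂*(b^(b/a))*(b^(c/a))*hA + d₁*d₂*hP
    - (d₂^(b/a))*(d₂^(c/a))*(a^(b/a))*(a^(c/a))*hA - d₁*(a^(b/a))*(a^(c/a))*hB
    - d₁*d₂*hR - d₁*d₂*habc

theorem stmt_12 (q k p : ℝ) (hq : 1 < q) (hqk : q < k) (hkp : k < p)
    (d₁ d₂ d₃ lam : ℝ) (hd₁ : 0 < d₁) (hd₂ : 0 < d₂) (hd₃ : 0 < d₃) (hlam : 0 < lam)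
    (f : ℝ → ℝ) (hf : ∀ t, f t = d₁ + d₂ * t ^ (p - q) - lam * d₃ * t ^ (k - q))
    (C₀ : ℝ)
    (hC₀ : C₀ = ((p - q) / (k - q)) ^ ((k - q) / (p - q)) *
        ((p - q) / (p - k)) ^ ((p - k) / (p - q))) :
    (∃ t : ℝ, 0 < t ∧ f t < 0) ↔
      C₀ * d₂ ^ ((k - q) / (p - q)) * d₁ ^ ((p - k) / (p - q)) / d₃ < lam := by
  set a := p - q with ha_def
  set b := k - q with hb_def
  set c := p - k with hc_def
  have hb : 0 < b := by simp only [hb_def]; linarith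
  have hc : 0 < c := by simp only [hc_def]; linarith
  have ha : 0 < a := by simp only [ha_def]; linarith
  have habc : a = b + c := by simp only [ha_def, hb_def, hc_def]; ring
  have hC₀' : C₀ = (a / b) ^ (b / a) * (a / c) ^ (c / a) := hC₀
  have lemA : ∀ t : ℝ, 0 < t →
      (f t < 0 ↔ (d₁ * t ^ (-b) + d₂ * t ^ c) / d₃ < lam) := by
    intro t ht
    rw [hf t]
    have htb : (0:ℝ) < t ^ (b:ℝ) := rpow_pos_of_pos ht _
    have heq : (d₁ + d₂ * t ^ (a:ℝ)) / (d₃ * t ^ (b:ℝ))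
        = (d₁ * t ^ (-b) + d₂ * t ^ (c:ℝ)) / d₃ := by
      have hta : t ^ (a:ℝ) = t ^ (b:ℝ) * t ^ (c:ℝ) := by
        rw [← rpow_add ht, ← habc]
      have htnb : t ^ (-b) = (t ^ (b:ℝ))⁻¹ := by rw [rpow_neg ht.le]
      rw [hta, htnb]
      field_simp
    rw [sub_neg, show lam * d₃ * t ^ (b:ℝ) = lam * (d₃ * t ^ (b:ℝ)) by ring,
      ← div_lt_iff₀ (by positivity), heq]
  constructor
  · rintro ⟨t, ht, hft⟩
    have h1 := (lemA t ht).mp hft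
    have h2 := amgm a b c d₁ d₂ t ha hb hc habc hd₁ hd₂ ht
    calc C₀ * d₂ ^ (b/a) * d₁ ^ (c/a) / d₃
        ≤ (d₁ * t ^ (-b) + d₂ * t ^ c) / d₃ := by
          rw [hC₀']
          exact (div_le_div_iff_of_pos_right hd₃).mpr h2
      _ < lam := h1
  · intro hT
    refine ⟨(d₁ * b / (d₂ * c)) ^ (1/a), rpow_pos_of_pos (by positivity) _, ?_⟩
    rw [lemA _ (rpow_pos_of_pos (by positivity) _)]
    rw [eq_at_tstar a b c d₁ d₂ ha hb hc habc hd₁ hd₂, ← hC₀']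
    exact hT
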